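/- Let B be a bipartite graph with bipartition (X,Y), |X| = k, |Y| = n - k, and m edges. Let B̄ be the bipartite complement of B on the same bipartition (with k(n-k) - m edges). Then σ₂(B) = n(2m + k² - nk) + σ₂(B̄), where σ₂(G) denotes the sum of squares of the degrees of the vertices of G. -/

import Mathlib

open Finset

/-- Sum of squares of degrees. -/
noncomputable def sigma2 {V : Type*} [Fintype V] (G : SimpleGraph V) : ℕ :=
  ∑ v, ((G.neighborSet v).ncard) ^ 2

/-- Every edge of `G` joins `X` to its complement. -/
def IsBipartiteOn {V : Type*} (X : Set V) (G : SimpleGraph V) : Prop :=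
  ∀ ⦃u v⦄, G.Adj u v → (u ∈ X ∧ v ∉ X) ∨ (v ∈ X ∧ u ∉ X)

/-- for a bipartite graph `B` on bipartition `(X, Xᶜ)` with `|X| = k`,
`n` vertices and `m` edges, and its bipartite complement `Bc`,
`σ₂(B) = n(2m + k² - nk) + σ₂(Bc)`. -/
theorem sigma2_eq_of_bipartite_compl {V : Type*} [Fintype V] (X : Set V)
    (B Bc : SimpleGraph V) (n k m : ℕ)
    (hn : n = Fintype.card V) (hk : k = X.ncard)
    (hB : IsBipartiteOn X B) (hm : B.edgeSet.ncard = m)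
    (hBc : ∀ u v, Bc.Adj u v ↔
      (((u ∈ X ∧ v ∉ X) ∨ (v ∈ X ∧ u ∉ X)) ∧ ¬ B.Adj u v)) :
    (sigma2 B : ℤ) =
      (n : ℤ) * (2 * (m : ℤ) + (k : ℤ) ^ 2 - (n : ℤ) * (k : ℤ)) + (sigma2 Bc : ℤ) := by
  classical
  set F : Finset V := X.toFinset with hF
  have hmemF : ∀ v, v ∈ F ↔ v ∈ X := fun v => Set.mem_toFinset
  -- degrees
  have hdeg : ∀ (G : SimpleGraph V) (v : V), (G.neighborSet v).ncard = G.degree v := by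
    intro G v
    rw [Set.ncard_eq_toFinset_card', Set.toFinset_card,
      SimpleGraph.card_neighborSet_eq_degree]
  -- neighbor sets of B
  have hBnX : ∀ v ∈ X, B.neighborSet v ⊆ Xᶜ := by
    intro v hv u hu
    rcases hB hu with ⟨h1, h2⟩ | ⟨h1, h2⟩
    · exact h2
    · exact absurd hv h2
  have hBnY : ∀ v ∉ X, B.neighborSet v ⊆ X := by
    intro v hv u hu
    rcases hB hu with ⟨h1, h2⟩ | ⟨h1, h2⟩
    · exact absurd h1 hv
    · exact h1
  -- neighbor sets of Bc
  have hBcX : ∀ v ∈ X, Bc.neighborSet v = Xᶜ \ B.neighborSet v := by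
    intro v hv
    ext u
    simp only [SimpleGraph.mem_neighborSet, hBc, Set.mem_diff, Set.mem_compl_iff]
    constructor
    · rintro ⟨(⟨h1, h2⟩ | ⟨h1, h2⟩), h3⟩
      · exact ⟨h2, h3⟩
      · exact absurd hv h2
    · rintro ⟨h1, h2⟩
      exact ⟨Or.inl ⟨hv, h1⟩, h2⟩
  have hBcY : ∀ v ∉ X, Bc.neighborSet v = X \ B.neighborSet v := by
    intro v hv
    ext u
    simp only [SimpleGraph.mem_neighborSet, hBc, Set.mem_diff]
    constructor
    · rintro ⟨(⟨h1, h2⟩ | ⟨h1, h2⟩), h3⟩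
      · exact absurd h1 hv
      · exact ⟨h1, h3⟩
    · rintro ⟨h1, h2⟩
      exact ⟨Or.inr ⟨h1, hv⟩, h2⟩
  -- cardinalities
  have hkn : k + Xᶜ.ncard = n := by
    rw [hk, hn, ← Nat.card_eq_fintype_card]
    exact Set.ncard_add_ncard_compl X
  -- integer-valued degrees
  set dd : V → ℤ := fun v => ((B.neighborSet v).ncard : ℤ) with hdd
  set ee : V → ℤ := fun v => ((Bc.neighborSet v).ncard : ℤ) with hee
  have h1 : ∀ v ∈ F, ee v = (n : ℤ) - k - dd v := by
    intro v hv
    rw [hmemF] at hv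
    have := Set.ncard_diff_add_ncard_of_subset (hBnX v hv) (Set.toFinite _)
    rw [← hBcX v hv] at this
    have hc : ((Xᶜ.ncard : ℤ)) = (n : ℤ) - k := by
      have := hkn; push_cast [← this]; ring
    simp only [hee, hdd]
    omega
  have h2 : ∀ v ∈ Fᶜ, ee v = (k : ℤ) - dd v := by
    intro v hv
    rw [Finset.mem_compl, hmemF] at hv
    have := Set.ncard_diff_add_ncard_of_subset (hBnY v hv) (Set.toFinite _)
    rw [← hBcY v hv] at this
    simp only [hee, hdd, hk]
    omega
  -- sum of degrees over X equals m
  have hmF : B.edgeSet.ncard = B.edgeFinset.card := by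
    rw [Set.ncard_eq_toFinset_card']; rfl
  have hSX : ∑ v ∈ F, B.degree v = m := by
    rw [← hm, hmF]
    simp only [SimpleGraph.degree]
    rw [← Finset.card_sigma]
    apply Finset.card_bij (fun p _ => Sym2.mk p.1 p.2)
    · rintro ⟨v, u⟩ hp
      simp only [Finset.mem_sigma, SimpleGraph.mem_neighborFinset] at hp
      rw [SimpleGraph.mem_edgeFinset]
      exact B.mem_edgeSet.mpr hp.2
    · rintro ⟨v, u⟩ hp ⟨v', u'⟩ hp' h
      simp only [Finset.mem_sigma, hmemF, SimpleGraph.mem_neighborFinset] at hp hp'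
      simp only [Sym2.mk, Sym2.eq_iff] at h
      rcases h with ⟨h1', h2'⟩ | ⟨h1', h2'⟩
      · subst h1'; subst h2'; rfl
      · exfalso
        rcases hB hp.2 with ⟨ha, hb⟩ | ⟨ha, hb⟩
        · exact hb (by rw [h2']; exact hp'.1)
        · exact hb hp.1
    · intro e he
      rw [SimpleGraph.mem_edgeFinset] at he
      induction e with
      | h u v =>
        have hadj : B.Adj u v := B.mem_edgeSet.mp he
        rcases hB hadj with ⟨h1', h2'⟩ | ⟨h1', h2'⟩
        · exact ⟨⟨u, v⟩, by simp [Finset.mem_sigma, hmemF, h1', hadj], rfl⟩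
        · exact ⟨⟨v, u⟩, by simp [Finset.mem_sigma, hmemF, h1', hadj.symm],
            Sym2.eq_swap⟩
  -- handshake
  have hHS : ∑ v ∈ F, B.degree v + ∑ v ∈ Fᶜ, B.degree v = 2 * m := by
    rw [Finset.sum_add_sum_compl, SimpleGraph.sum_degrees_eq_twice_card_edges, ← hmF, hm]
  have hSY : ∑ v ∈ Fᶜ, B.degree v = m := by omega
  have hSXZ : ∑ v ∈ F, dd v = (m : ℤ) := by
    simp only [hdd, hdeg]
    exact_mod_cast congrArg (Nat.cast : ℕ → ℤ) hSX
  have hSYZ : ∑ v ∈ Fᶜ, dd v = (m : ℤ) := by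
    simp only [hdd, hdeg]
    exact_mod_cast congrArg (Nat.cast : ℕ → ℤ) hSY
  -- cardinalities of F and Fᶜ
  have hcardF : (F.card : ℤ) = (k : ℤ) := by
    rw [hF, hk, Set.ncard_eq_toFinset_card']
  have hcardFc : (Fᶜ.card : ℤ) = (n : ℤ) - k := by
    have : F.card + Fᶜ.card = Fintype.card V := by
      rw [Finset.card_add_card_compl]
    have hkF : F.card = k := by rw [hF, hk, Set.ncard_eq_toFinset_card']
    omega
  -- main computation
  have hmain : (∑ v, dd v ^ 2) = (n : ℤ) * (2 * m + (k : ℤ) ^ 2 - n * k) + ∑ v, ee v ^ 2 := by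
    rw [← Finset.sum_add_sum_compl F (fun v => dd v ^ 2),
        ← Finset.sum_add_sum_compl F (fun v => ee v ^ 2)]
    have e1 : ∑ v ∈ F, ee v ^ 2 = ∑ v ∈ F, (((n : ℤ) - k) ^ 2 - 2 * ((n : ℤ) - k) * dd v + dd v ^ 2) := by
      apply Finset.sum_congr rfl
      intro v hv
      rw [h1 v hv]; ring
    have e2 : ∑ v ∈ Fᶜ, ee v ^ 2 = ∑ v ∈ Fᶜ, ((k : ℤ) ^ 2 - 2 * (k : ℤ) * dd v + dd v ^ 2) := by
      apply Finset.sum_congr rfl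
      intro v hv
      rw [h2 v hv]; ring
    rw [e1, e2]
    simp only [Finset.sum_add_distrib, Finset.sum_sub_distrib, ← Finset.mul_sum,
      Finset.sum_const, nsmul_eq_mul, hSXZ, hSYZ, hcardF, hcardFc]
    ring
  have hsB : (sigma2 B : ℤ) = ∑ v, dd v ^ 2 := by
    simp [sigma2, hdd]
  have hsBc : (sigma2 Bc : ℤ) = ∑ v, ee v ^ 2 := by
    simp [sigma2, hee]
  rw [hsB, hsBc, hmain]
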